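/- Assume hypotheses H0, H1, H2. Then (G, β, δ) is a conical group; explicitly, for all x, y, z in G and all η > 0: β(x, β(y, z)) = β(β(x, y), z); β(x, e) = β(e, x) = x; β(x, x⁻¹) = β(x⁻¹, x) = e; and β(δ_η x, δ_η y) = δ_η β(x, y). -/

import Mathlib

open Filter Topology

/-- For a locally compact topological group `G` with maps
`δ_ε : G → G` (`ε > 0`) satisfying `δ_ε ∘ δ_μ = δ_{εμ}`, `δ_1 = id`, and the
axioms H0, H1, H2 (with limits uniform on compact sets), the limit operation
`β` makes `(G, β, δ)` a conical group: `β` is associative, has neutral element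
`e = 1`, `x⁻¹` is the `β`-inverse of `x`, and `β (δ_η x) (δ_η y) = δ_η (β x y)`
for every `η > 0`. -/
theorem conical_group_of_H0_H1_H2
    {G : Type*} [Group G] [UniformSpace G] [IsUniformGroup G]
    [LocallyCompactSpace G] [T2Space G]
    (δ : ℝ → G → G)
    (hδcont : ∀ ε : ℝ, 0 < ε → Continuous (δ ε))
    (hcomp : ∀ ε μ : ℝ, 0 < ε → 0 < μ → ∀ x : G, δ ε (δ μ x) = δ (ε * μ) x)
    (hone : ∀ x : G, δ 1 x = x)
    (hH0 : ∀ K : Set G, IsCompact K →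
      TendstoUniformlyOn (fun (ε : ℝ) (x : G) => δ ε x) (fun _ => (1 : G))
        (𝓝[>] (0 : ℝ)) K)
    (β : G → G → G)
    (hH1 : ∀ K : Set (G × G), IsCompact K →
      TendstoUniformlyOn (fun (ε : ℝ) (p : G × G) => δ ε⁻¹ (δ ε p.1 * δ ε p.2))
        (fun p => β p.1 p.2) (𝓝[>] (0 : ℝ)) K)
    (hH2 : ∀ K : Set G, IsCompact K →
      TendstoUniformlyOn (fun (ε : ℝ) (x : G) => δ ε⁻¹ ((δ ε x)⁻¹)) (fun x => x⁻¹)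
        (𝓝[>] (0 : ℝ)) K) :
    ∀ x y z : G, ∀ η : ℝ, 0 < η →
      β x (β y z) = β (β x y) z ∧
      β x 1 = x ∧ β 1 x = x ∧
      β x x⁻¹ = 1 ∧ β x⁻¹ x = 1 ∧
      β (δ η x) (δ η y) = δ η (β x y) := by
  have hpos : ∀ᶠ ε in 𝓝[>] (0 : ℝ), 0 < ε := self_mem_nhdsWithin
  -- pointwise versions of the hypotheses
  have hptH1 : ∀ p : G × G,
      Tendsto (fun ε : ℝ => δ ε⁻¹ (δ ε p.1 * δ ε p.2)) (𝓝[>] (0 : ℝ))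
        (𝓝 (β p.1 p.2)) :=
    fun p => (hH1 {p} isCompact_singleton).tendsto_at rfl
  have hptH2 : ∀ x : G,
      Tendsto (fun ε : ℝ => δ ε⁻¹ ((δ ε x)⁻¹)) (𝓝[>] (0 : ℝ)) (𝓝 x⁻¹) :=
    fun x => (hH2 {x} isCompact_singleton).tendsto_at rfl
  have hptH0 : ∀ x : G,
      Tendsto (fun ε : ℝ => δ ε x) (𝓝[>] (0 : ℝ)) (𝓝 (1 : G)) :=
    fun x => (hH0 {x} isCompact_singleton).tendsto_at rfl
  -- continuity of β
  have hβcont : Continuous (fun p : G × G => β p.1 p.2) := by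
    rw [continuous_iff_continuousAt]
    intro p
    obtain ⟨K, hKc, hKmem⟩ := exists_compact_mem_nhds p
    have hec : ∀ᶠ ε in 𝓝[>] (0 : ℝ),
        ContinuousOn (fun q : G × G => δ ε⁻¹ (δ ε q.1 * δ ε q.2)) K :=
      hpos.mono fun ε hε =>
        (((hδcont ε⁻¹ (by positivity)).comp
          (((hδcont ε hε).comp continuous_fst).mul
            ((hδcont ε hε).comp continuous_snd))).continuousOn)
    exact ((hH1 K hKc).continuousOn hec.frequently).continuousAt hKmem
  -- key composition lemma : moving points
  have key : ∀ (g : ℝ → G × G) (p : G × G), Tendsto g (𝓝[>] (0 : ℝ)) (𝓝 p) →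
      Tendsto (fun ε : ℝ => δ ε⁻¹ (δ ε (g ε).1 * δ ε (g ε).2)) (𝓝[>] (0 : ℝ))
        (𝓝 (β p.1 p.2)) := by
    intro g p hg
    obtain ⟨K, hKc, hKmem⟩ := exists_compact_mem_nhds p
    refine (hH1 K hKc).tendsto_comp hβcont.continuousWithinAt ?_
    rw [tendsto_nhdsWithin_iff]
    exact ⟨hg, hg hKmem⟩
  -- the scaled identity: δ ε⁻¹ 1 tends to β 1 1
  have hc1 : Tendsto (fun ε : ℝ => δ ε⁻¹ (1 : G)) (𝓝[>] (0 : ℝ)) (𝓝 (β 1 1)) := by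
    have hg : Tendsto (fun ε : ℝ => ((1 : G), δ ε⁻¹ ((δ ε (1 : G))⁻¹)))
        (𝓝[>] (0 : ℝ)) (𝓝 ((1 : G), (1 : G))) := by
      have := (tendsto_const_nhds (x := (1 : G)) (f := 𝓝[>] (0 : ℝ))).prodMk_nhds
        (hptH2 (1 : G))
      simpa using this
    have hk := key _ _ hg
    refine (Tendsto.congr' ?_ hk :)
    filter_upwards [hpos] with ε hε
    have h1 : δ ε (δ ε⁻¹ ((δ ε (1 : G))⁻¹)) = (δ ε (1 : G))⁻¹ := by
      rw [hcomp ε ε⁻¹ hε (by positivity), mul_inv_cancel₀ (ne_of_gt hε), hone]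
    simp only [h1, mul_inv_cancel]
  -- β 1 1 = 1
  have hδηc : ∀ η : ℝ, 0 < η → δ η (β 1 1) = β 1 1 := by
    intro η hη
    have t1 : Tendsto (fun ε : ℝ => δ η (δ ε⁻¹ (1 : G))) (𝓝[>] (0 : ℝ))
        (𝓝 (δ η (β 1 1))) := ((hδcont η hη).tendsto _).comp hc1
    have tmul : Tendsto (fun ε : ℝ => ε / η) (𝓝[>] (0 : ℝ)) (𝓝[>] (0 : ℝ)) := by
      rw [tendsto_nhdsWithin_iff]
      constructor
      · have := (tendsto_id.mono_left (nhdsWithin_le_nhds : 𝓝[>] (0 : ℝ) ≤ 𝓝 0)).div_const η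
        simpa using this
      · exact hpos.mono fun ε hε => div_pos hε hη
    have t2 : Tendsto (fun ε : ℝ => δ (ε / η)⁻¹ (1 : G)) (𝓝[>] (0 : ℝ))
        (𝓝 (β 1 1)) := hc1.comp tmul
    have heq : (fun ε : ℝ => δ η (δ ε⁻¹ (1 : G))) =ᶠ[𝓝[>] (0 : ℝ)]
        (fun ε : ℝ => δ (ε / η)⁻¹ (1 : G)) := by
      filter_upwards [hpos] with ε hε
      rw [hcomp η ε⁻¹ hη (by positivity)]
      congr 1
      field_simp
    exact tendsto_nhds_unique (t1.congr' heq) t2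
  have hc : β 1 1 = 1 := by
    have t1 : Tendsto (fun η : ℝ => δ η (β 1 1)) (𝓝[>] (0 : ℝ)) (𝓝 (1 : G)) :=
      hptH0 _
    have t2 : Tendsto (fun η : ℝ => δ η (β 1 1)) (𝓝[>] (0 : ℝ)) (𝓝 (β 1 1)) := by
      refine Tendsto.congr' ?_ tendsto_const_nhds
      filter_upwards [hpos] with η hη
      exact (hδηc η hη).symm
    exact tendsto_nhds_unique t2 t1
  have hδinv1 : Tendsto (fun ε : ℝ => δ ε⁻¹ (1 : G)) (𝓝[>] (0 : ℝ)) (𝓝 (1 : G)) := by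
    rwa [hc] at hc1
  -- neutral element
  have hright : ∀ x : G, β x 1 = x := by
    intro x
    have hg : Tendsto (fun ε : ℝ => (x, δ ε⁻¹ (1 : G))) (𝓝[>] (0 : ℝ))
        (𝓝 (x, (1 : G))) := tendsto_const_nhds.prodMk_nhds hδinv1
    have hk := key _ _ hg
    have heq : (fun ε : ℝ => δ ε⁻¹ (δ ε x * δ ε (δ ε⁻¹ (1 : G)))) =ᶠ[𝓝[>] (0 : ℝ)]
        (fun _ : ℝ => x) := by
      filter_upwards [hpos] with ε hε
      rw [hcomp ε ε⁻¹ hε (by positivity), mul_inv_cancel₀ (ne_of_gt hε), hone, mul_one,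
        hcomp ε⁻¹ ε (by positivity) hε, inv_mul_cancel₀ (ne_of_gt hε), hone]
    simpa using tendsto_nhds_unique (hk.congr' heq) tendsto_const_nhds
  have hleft : ∀ x : G, β 1 x = x := by
    intro x
    have hg : Tendsto (fun ε : ℝ => (δ ε⁻¹ (1 : G), x)) (𝓝[>] (0 : ℝ))
        (𝓝 ((1 : G), x)) := hδinv1.prodMk_nhds tendsto_const_nhds
    have hk := key _ _ hg
    have heq : (fun ε : ℝ => δ ε⁻¹ (δ ε (δ ε⁻¹ (1 : G)) * δ ε x)) =ᶠ[𝓝[>] (0 : ℝ)]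
        (fun _ : ℝ => x) := by
      filter_upwards [hpos] with ε hε
      rw [hcomp ε ε⁻¹ hε (by positivity), mul_inv_cancel₀ (ne_of_gt hε), hone, one_mul,
        hcomp ε⁻¹ ε (by positivity) hε, inv_mul_cancel₀ (ne_of_gt hε), hone]
    simpa using tendsto_nhds_unique (hk.congr' heq) tendsto_const_nhds
  -- inverses
  have hinvr : ∀ x : G, β x x⁻¹ = 1 := by
    intro x
    have hg : Tendsto (fun ε : ℝ => (x, δ ε⁻¹ ((δ ε x)⁻¹))) (𝓝[>] (0 : ℝ))
        (𝓝 (x, x⁻¹)) := tendsto_const_nhds.prodMk_nhds (hptH2 x)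
    have hk := key _ _ hg
    have heq : (fun ε : ℝ => δ ε⁻¹ (δ ε x * δ ε (δ ε⁻¹ ((δ ε x)⁻¹)))) =ᶠ[𝓝[>] (0 : ℝ)]
        (fun ε : ℝ => δ ε⁻¹ (1 : G)) := by
      filter_upwards [hpos] with ε hε
      rw [hcomp ε ε⁻¹ hε (by positivity), mul_inv_cancel₀ (ne_of_gt hε), hone,
        mul_inv_cancel]
    exact tendsto_nhds_unique (hk.congr' heq) hδinv1
  have hinvl : ∀ x : G, β x⁻¹ x = 1 := by
    intro x
    have hg : Tendsto (fun ε : ℝ => (δ ε⁻¹ ((δ ε x)⁻¹), x)) (𝓝[>] (0 : ℝ))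
        (𝓝 (x⁻¹, x)) := (hptH2 x).prodMk_nhds tendsto_const_nhds
    have hk := key _ _ hg
    have heq : (fun ε : ℝ => δ ε⁻¹ (δ ε (δ ε⁻¹ ((δ ε x)⁻¹)) * δ ε x)) =ᶠ[𝓝[>] (0 : ℝ)]
        (fun ε : ℝ => δ ε⁻¹ (1 : G)) := by
      filter_upwards [hpos] with ε hε
      rw [hcomp ε ε⁻¹ hε (by positivity), mul_inv_cancel₀ (ne_of_gt hε), hone,
        inv_mul_cancel]
    exact tendsto_nhds_unique (hk.congr' heq) hδinv1
  -- associativity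
  have hassoc : ∀ x y z : G, β x (β y z) = β (β x y) z := by
    intro x y z
    have hg1 : Tendsto (fun ε : ℝ => (x, δ ε⁻¹ (δ ε y * δ ε z))) (𝓝[>] (0 : ℝ))
        (𝓝 (x, β y z)) := tendsto_const_nhds.prodMk_nhds (hptH1 (y, z))
    have hg2 : Tendsto (fun ε : ℝ => (δ ε⁻¹ (δ ε x * δ ε y), z)) (𝓝[>] (0 : ℝ))
        (𝓝 (β x y, z)) := (hptH1 (x, y)).prodMk_nhds tendsto_const_nhds
    have hk1 := key _ _ hg1
    have hk2 := key _ _ hg2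
    have heq1 : (fun ε : ℝ => δ ε⁻¹ (δ ε x * δ ε (δ ε⁻¹ (δ ε y * δ ε z))))
        =ᶠ[𝓝[>] (0 : ℝ)] (fun ε : ℝ => δ ε⁻¹ (δ ε x * (δ ε y * δ ε z))) := by
      filter_upwards [hpos] with ε hε
      rw [hcomp ε ε⁻¹ hε (by positivity), mul_inv_cancel₀ (ne_of_gt hε), hone]
    have heq2 : (fun ε : ℝ => δ ε⁻¹ (δ ε (δ ε⁻¹ (δ ε x * δ ε y)) * δ ε z))
        =ᶠ[𝓝[>] (0 : ℝ)] (fun ε : ℝ => δ ε⁻¹ (δ ε x * (δ ε y * δ ε z))) := by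
      filter_upwards [hpos] with ε hε
      rw [hcomp ε ε⁻¹ hε (by positivity), mul_inv_cancel₀ (ne_of_gt hε), hone, mul_assoc]
    exact tendsto_nhds_unique (hk1.congr' heq1) (hk2.congr' heq2)
  -- dilation compatibility
  have hdil : ∀ (x y : G) (η : ℝ), 0 < η → β (δ η x) (δ η y) = δ η (β x y) := by
    intro x y η hη
    have t1 : Tendsto (fun ε : ℝ => δ ε⁻¹ (δ ε (δ η x) * δ ε (δ η y)))
        (𝓝[>] (0 : ℝ)) (𝓝 (β (δ η x) (δ η y))) := hptH1 (δ η x, δ η y)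
    have tmul : Tendsto (fun ε : ℝ => ε * η) (𝓝[>] (0 : ℝ)) (𝓝[>] (0 : ℝ)) := by
      rw [tendsto_nhdsWithin_iff]
      constructor
      · have := (tendsto_id.mono_left (nhdsWithin_le_nhds : 𝓝[>] (0 : ℝ) ≤ 𝓝 0)).mul_const η
        simpa using this
      · exact hpos.mono fun ε hε => mul_pos hε hη
    have t2 : Tendsto (fun ε : ℝ =>
        δ η (δ (ε * η)⁻¹ (δ (ε * η) x * δ (ε * η) y))) (𝓝[>] (0 : ℝ))
        (𝓝 (δ η (β x y))) :=
      ((hδcont η hη).tendsto _).comp ((hptH1 (x, y)).comp tmul)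
    have heq : (fun ε : ℝ => δ ε⁻¹ (δ ε (δ η x) * δ ε (δ η y))) =ᶠ[𝓝[>] (0 : ℝ)]
        (fun ε : ℝ => δ η (δ (ε * η)⁻¹ (δ (ε * η) x * δ (ε * η) y))) := by
      filter_upwards [hpos] with ε hε
      have hεη : (0 : ℝ) < ε * η := mul_pos hε hη
      rw [hcomp ε η hε hη, hcomp ε η hε hη, hcomp η (ε * η)⁻¹ hη (by positivity)]
      congr 2
      field_simp
    exact tendsto_nhds_unique (t1.congr' heq) t2
  intro x y z η hη
  exact ⟨hassoc x y z, hright x, hleft x, hinvr x, hinvl x, hdil x y η hη⟩
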